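/- Let b̄ be an F_q-subline on the line ℓ̄_b of PG(2,q³). In the Bose representation, the q+1 planes of [b] form a 2-regulus (one system of maximal subspaces of a Segre variety S_{1;2}) contained in the 5-space Π_b = ⟨ℓ_b, ℓ_b^q, ℓ_b^{q²}⟩ ∩ PG(8,q). -/

import Mathlib

/-- Let b̄ be an F_q-subline of a line of PG(2,q³): its points are
x P₁ + y P₂ for x, y ∈ F_q (not both 0), where P₁, P₂ are independent points of
K³ (K = F_{q³}).  In the Bose representation (K³ identified with F_q⁹ via the
basis {1,τ,τ²}), the q+1 Bose planes of the points of b form a 2-regulus (one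
system of maximal planes of a Segre variety S_{1;2}, i.e. the image under an
injective linear map h of the standard system {c ⊗ u : u ∈ F_q³}, c ∈ F_q²\{0})
contained in the 5-space Π_b = {Q : X_Q ∈ ⟨P₁,P₂⟩_K} (which is ⟨ℓ,ℓ^q,ℓ^{q²}⟩
∩ PG(8,q)). -/
theorem stmt16 {F K : Type*} [Field F] [Fintype F] [Field K] [Algebra F K] (τ : K)
    (b : Module.Basis (Fin 3) F K) (hb : ∀ j : Fin 3, b j = τ ^ (j : ℕ))
    (P₁ P₂ : Fin 3 → K) (hind : LinearIndependent K ![P₁, P₂])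
    (XQ : (Fin 3 → Fin 3 → F) → Fin 3 → K)
    (hXQ : ∀ Q i, XQ Q i = ∑ j : Fin 3, algebraMap F K (Q i j) * τ ^ (j : ℕ))
    (bose : (Fin 3 → K) → Set (Fin 3 → Fin 3 → F))
    (hbose : ∀ Y, bose Y = {Q : Fin 3 → Fin 3 → F | ∃ ρ : K, XQ Q = ρ • Y})
    (Pib : Set (Fin 3 → Fin 3 → F))
    (hPib : Pib = {Q | XQ Q ∈ Submodule.span K {P₁, P₂}}) :
    (∀ x y : F, ¬(x = 0 ∧ y = 0) →
      bose (algebraMap F K x • P₁ + algebraMap F K y • P₂) ⊆ Pib) ∧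
    ∃ h : (Fin 2 → Fin 3 → F) →ₗ[F] (Fin 3 → Fin 3 → F),
      Function.Injective h ∧ Set.range h ⊆ Pib ∧
      {S | ∃ x y : F, ¬(x = 0 ∧ y = 0) ∧
          S = bose (algebraMap F K x • P₁ + algebraMap F K y • P₂)}
        = {S | ∃ c : Fin 2 → F, c ≠ 0 ∧
            S = h '' {M | ∃ u : Fin 3 → F, M = fun i j => c i * u j}} := by
  rw [LinearIndependent.pair_iff] at hind
  set E : K ≃ₗ[F] (Fin 3 → F) := b.equivFun with hE
  set Xe : (Fin 3 → Fin 3 → F) ≃ₗ[F] (Fin 3 → K) :=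
    LinearEquiv.piCongrRight (fun _ => E.symm) with hXe
  have hX : ∀ Q, XQ Q = Xe Q := by
    intro Q
    funext i
    rw [hXQ]
    show _ = E.symm (Q i)
    rw [hE, Module.Basis.equivFun_symm_apply]
    refine Finset.sum_congr rfl fun j _ => ?_
    rw [hb, Algebra.smul_def]
  -- the "affine frame" linear map into K³
  set f : (Fin 2 → Fin 3 → F) →ₗ[F] (Fin 3 → K) :=
    { toFun := fun M => E.symm (M 0) • P₁ + E.symm (M 1) • P₂
      map_add' := by
        intro M N
        simp only [Pi.add_apply, map_add, add_smul]
        abel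
      map_smul' := by
        intro c M
        simp only [Pi.smul_apply, map_smul, RingHom.id_apply, smul_add, smul_assoc] } with hf
  have hfapp : ∀ M, f M = E.symm (M 0) • P₁ + E.symm (M 1) • P₂ := fun _ => rfl
  set h : (Fin 2 → Fin 3 → F) →ₗ[F] (Fin 3 → Fin 3 → F) :=
    Xe.symm.toLinearMap.comp f with hh
  have hXh : ∀ M, XQ (h M) = f M := by
    intro M
    rw [hX]
    show Xe (Xe.symm (f M)) = f M
    exact Xe.apply_symm_apply _
  have hsmul : ∀ (γ : F) (ρ : K) (P : Fin 3 → K),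
      (γ • ρ) • P = ρ • (algebraMap F K γ • P) := by
    intro γ ρ P
    rw [smul_smul]
    congr 1
    rw [Algebra.smul_def, mul_comm]
  have hfc : ∀ (c : Fin 2 → F) (u : Fin 3 → F),
      f (fun i j => c i * u j)
        = (E.symm u) • (algebraMap F K (c 0) • P₁ + algebraMap F K (c 1) • P₂) := by
    intro c u
    rw [hfapp]
    have h0 : (fun j => c 0 * u j) = c 0 • u := rfl
    have h1 : (fun j => c 1 * u j) = c 1 • u := rfl
    show E.symm (fun j => c 0 * u j) • P₁ + E.symm (fun j => c 1 * u j) • P₂ = _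
    rw [h0, h1, map_smul, map_smul, smul_add, hsmul, hsmul]
  -- key lemma: each Bose plane is the image of a standard plane
  have hkey : ∀ c : Fin 2 → F,
      bose (algebraMap F K (c 0) • P₁ + algebraMap F K (c 1) • P₂)
        = h '' {M | ∃ u : Fin 3 → F, M = fun i j => c i * u j} := by
    intro c
    rw [hbose]
    ext Q
    constructor
    · rintro ⟨ρ, hρ⟩
      refine ⟨fun i j => c i * E ρ j, ⟨E ρ, rfl⟩, ?_⟩
      have : f (fun i j => c i * E ρ j)
          = ρ • (algebraMap F K (c 0) • P₁ + algebraMap F K (c 1) • P₂) := by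
        rw [hfc, E.symm_apply_apply]
      show Xe.symm (f _) = Q
      rw [this, ← hρ, hX]
      exact Xe.symm_apply_apply Q
    · rintro ⟨M, ⟨u, rfl⟩, rfl⟩
      exact ⟨E.symm u, by rw [hXh, hfc]⟩
  constructor
  · intro x y _ Q hQ
    rw [hbose] at hQ
    obtain ⟨ρ, hρ⟩ := hQ
    rw [hPib]
    show XQ Q ∈ Submodule.span K {P₁, P₂}
    rw [hρ, smul_add, smul_smul, smul_smul]
    exact Submodule.mem_span_pair.2 ⟨_, _, rfl⟩
  · refine ⟨h, ?_, ?_, ?_⟩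
    · -- injectivity
      intro M N hMN
      have hfMN : f M = f N := Xe.symm.injective hMN
      have hsub : (E.symm (M 0) - E.symm (N 0)) • P₁
          + (E.symm (M 1) - E.symm (N 1)) • P₂ = 0 := by
        rw [sub_smul, sub_smul]
        rw [hfapp, hfapp] at hfMN
        rw [sub_add_sub_comm, hfMN, sub_self]
      obtain ⟨h0, h1⟩ := hind _ _ hsub
      have e0 : M 0 = N 0 := E.symm.injective (by rwa [← sub_eq_zero])
      have e1 : M 1 = N 1 := E.symm.injective (by rwa [← sub_eq_zero])
      funext i
      fin_cases i
      · exact e0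
      · exact e1
    · -- range ⊆ Π_b
      rintro _ ⟨M, rfl⟩
      rw [hPib]
      show XQ (h M) ∈ Submodule.span K {P₁, P₂}
      rw [hXh, hfapp]
      exact Submodule.mem_span_pair.2 ⟨_, _, rfl⟩
    · -- the family of planes
      ext S
      simp only [Set.mem_setOf_eq]
      constructor
      · rintro ⟨x, y, hxy, rfl⟩
        refine ⟨![x, y], ?_, ?_⟩
        · intro hc
          exact hxy ⟨by simpa using congrFun hc 0, by simpa using congrFun hc 1⟩
        · simpa using hkey ![x, y]
      · rintro ⟨c, hc, rfl⟩
        refine ⟨c 0, c 1, ?_, (hkey c).symm⟩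
        rintro ⟨h0, h1⟩
        apply hc
        funext i
        fin_cases i
        · exact h0
        · exact h1
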